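/- (Coulson integral formula for a vertex) Let G be a finite simple graph with adjacency matrix A and v_i a vertex. Then E_G(v_i) = (1/π) ∫_{-∞}^{∞} [1 - ix·φ(G - v_i; ix)/φ(G; ix)] dx, where the integral is understood as an improper Riemann integral (principal value) and E_G(v_i) = |A|_{ii}. -/

import Mathlib

open Matrix BigOperators Finset Polynomial

noncomputable def adjMat {V : Type*} [Fintype V] (G : SimpleGraph V) : Matrix V V ℝ :=
  letI := Classical.decRel G.Adj; G.adjMatrix ℝ

noncomputable def absMat {V : Type*} [Fintype V] [DecidableEq V] (A : Matrix V V ℝ) :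
    Matrix V V ℝ :=
  ((Matrix.posSemidef_self_mul_conjTranspose A).1.eigenvectorUnitary : Matrix V V ℝ) *
    diagonal ((↑) ∘ Real.sqrt ∘ (Matrix.posSemidef_self_mul_conjTranspose A).1.eigenvalues) *
    (star (Matrix.posSemidef_self_mul_conjTranspose A).1.eigenvectorUnitary : Matrix V V ℝ)

/-- The energy of a vertex: the (i,i) entry of |A| = (A Aᴴ)^{1/2}. -/
noncomputable def vertexEnergy {V : Type*} [Fintype V] [DecidableEq V]
    (G : SimpleGraph V) (i : V) : ℝ :=
  absMat (adjMat G) i i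

open MeasureTheory Filter


lemma den_ne (μ : ℝ) (hμ : μ ≠ 0) (x : ℝ) : (μ:ℂ) - Complex.I * x ≠ 0 := by
  intro h
  have := congrArg Complex.re h
  simp [Complex.ext_iff] at this
  exact hμ this

lemma intB (μ R S : ℝ) :
    IntervalIntegrable (fun x : ℝ => (μ:ℂ)/((μ:ℂ) - Complex.I * x)) volume R S := by
  rcases eq_or_ne μ 0 with h | h
  · simp [h]
  · exact (continuous_const.div (by continuity) (fun x => den_ne μ h x)).intervalIntegrable _ _

lemma hasDeriv (μ : ℝ) (hμ : μ ≠ 0) (x : ℝ) :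
    HasDerivAt (fun y : ℝ => ((|μ| * Real.arctan (y/|μ|) : ℝ) : ℂ)
        + Complex.I * ((μ/2) * Real.log (μ^2 + y^2) : ℝ))
      ((μ:ℂ)/((μ:ℂ) - Complex.I * x)) x := by
  have habs : |μ| ≠ 0 := abs_ne_zero.2 hμ
  have hsq : μ^2 + x^2 ≠ 0 := by positivity
  have h1 : HasDerivAt (fun y : ℝ => |μ| * Real.arctan (y/|μ|)) (μ^2/(μ^2+x^2)) x := by
    have := (Real.hasDerivAt_arctan (x/|μ|)).comp x ((hasDerivAt_id x).div_const |μ|)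
    have h2 := this.const_mul |μ|
    refine h2.congr_deriv ?_
    symm
    field_simp
    rw [← sq_abs μ]
    ring
  have h2 : HasDerivAt (fun y : ℝ => (μ/2) * Real.log (μ^2 + y^2)) (μ*x/(μ^2+x^2)) x := by
    have hg : HasDerivAt (fun y : ℝ => μ^2 + y^2) (2*x) x := by
      simpa using (hasDerivAt_pow 2 x).const_add (μ^2)
    have := ((Real.hasDerivAt_log hsq).comp x hg).const_mul (μ/2)
    refine this.congr_deriv ?_
    symm
    field_simp
  have := h1.ofReal_comp.add (h2.ofReal_comp.const_mul Complex.I)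
  refine this.congr_deriv ?_
  symm
  rw [div_eq_iff (den_ne μ hμ x)]
  have hc : ((μ:ℂ)^2 + x^2) ≠ 0 := by exact_mod_cast Complex.ofReal_ne_zero.2 hsq
  push_cast
  field_simp
  ring_nf
  rw [Complex.I_sq]
  ring

lemma keyLimit (μ : ℝ) :
    Tendsto (fun R : ℝ => ∫ x in (-R)..R, (μ:ℂ)/((μ:ℂ) - Complex.I * x)) atTop
      (nhds ((Real.pi * |μ| : ℝ) : ℂ)) := by
  rcases eq_or_ne μ 0 with h | h
  · simpa [h] using tendsto_const_nhds
  · have hval : ∀ R : ℝ, (∫ x in (-R)..R, (μ:ℂ)/((μ:ℂ) - Complex.I * x))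
        = ((2 * |μ| * Real.arctan (R/|μ|) : ℝ) : ℂ) := by
      intro R
      rw [intervalIntegral.integral_eq_sub_of_hasDerivAt (fun x _ => hasDeriv μ h x)
        (intB μ (-R) R)]
      simp only [neg_div, Real.arctan_neg, neg_sq]
      push_cast
      ring
    simp only [hval]
    have harc : Tendsto (fun R : ℝ => Real.arctan (R/|μ|)) atTop (nhds (Real.pi/2)) :=
      (tendsto_nhds_of_tendsto_nhdsWithin Real.tendsto_arctan_atTop).comp
        (tendsto_id.atTop_div_const (abs_pos.2 h))
    have := (Complex.continuous_ofReal.tendsto _).comp (harc.const_mul (2 * |μ|))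
    convert this using 2
    · rfl
    push_cast
    ring



lemma adjMat_isHermitian {V : Type*} [Fintype V] (G : SimpleGraph V) :
    (adjMat G).IsHermitian := by
  ext a b
  simp only [adjMat, conjTranspose_apply, star_trivial]
  simp only [SimpleGraph.adjMatrix_apply]
  congr 1
  exact propext (SimpleGraph.adj_comm G b a)

section algebra

variable {m : Type*} [Fintype m] [DecidableEq m] {A : Matrix m m ℝ} (hA : A.IsHermitian)

local notation "μ" => Matrix.IsHermitian.eigenvalues hA
local notation "U" => (Matrix.IsHermitian.eigenvectorUnitary hA : Matrix m m ℝ)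

lemma entry_helper {m R : Type*} [Fintype m] [DecidableEq m] [CommRing R] [StarRing R]
    (W : Matrix m m R) (d : m → R) (j : m) :
    (W * diagonal d * Wᴴ) j j = ∑ k, d k * (W j k * star (W j k)) := by
  simp only [Matrix.mul_apply, Matrix.conjTranspose_apply, Matrix.diagonal_apply,
    Finset.sum_ite_eq, Finset.mem_univ, if_true, mul_ite, mul_zero, ite_mul, zero_mul]
  exact Finset.sum_congr rfl fun k _ => by simp; ring

lemma spectral : A = U * diagonal μ * Uᴴ := by
  have h := hA.spectral_theorem
  simpa [Matrix.star_eq_conjTranspose] using h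

lemma U_mul_Uh : U * Uᴴ = 1 := by
  have := (Matrix.IsHermitian.eigenvectorUnitary hA).2
  rw [Unitary.mem_iff] at this
  simpa [star_eq_conjTranspose] using this.2

lemma Uh_mul_U : Uᴴ * U = 1 := by
  have := (Matrix.IsHermitian.eigenvectorUnitary hA).2
  rw [Unitary.mem_iff] at this
  simpa [star_eq_conjTranspose] using this.1

lemma sum_c_one (i : m) : ∑ k, (U i k)^2 = 1 := by
  have h := congrFun (congrFun (U_mul_Uh hA) i) i
  simp only [Matrix.mul_apply, Matrix.conjTranspose_apply, Matrix.one_apply_eq,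
    star_trivial] at h
  rw [← h]
  exact Finset.sum_congr rfl fun k _ => sq (U i k)

end algebra

section cx
variable {m : Type*} [Fintype m] [DecidableEq m]

lemma hmap (P Q : Matrix m m ℝ) :
    (P * Q).map Complex.ofReal = P.map Complex.ofReal * Q.map Complex.ofReal := by
  ext a b
  simp [Matrix.mul_apply, Matrix.map_apply]

lemma hmap_one : (1 : Matrix m m ℝ).map Complex.ofReal = 1 := by
  have := Matrix.map_one (f := Complex.ofRealHom) (n := m) (by simp) (by simp)
  simpa using this

lemma conjT_map (P : Matrix m m ℝ) :
    (P.map Complex.ofReal)ᴴ = (Pᴴ).map Complex.ofReal := by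
  ext a b
  simp [Matrix.conjTranspose_apply, Matrix.map_apply, Complex.conj_ofReal]

lemma conj_mul_conj {R : Type*} [CommRing R] [StarRing R] (W D E : Matrix m m R) (h : Wᴴ * W = 1) :
    (W * D * Wᴴ) * (W * E * Wᴴ) = W * (D * E) * Wᴴ := by
  calc (W * D * Wᴴ) * (W * E * Wᴴ) = W * (D * ((Wᴴ * W) * (E * Wᴴ))) := by
        simp only [Matrix.mul_assoc]
      _ = W * (D * E) * Wᴴ := by rw [h, one_mul, Matrix.mul_assoc, Matrix.mul_assoc]

end cx

section energy
variable {m : Type*} [Fintype m] [DecidableEq m] {A : Matrix m m ℝ} (hA : A.IsHermitian)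

local notation "μ" => Matrix.IsHermitian.eigenvalues hA
local notation "U" => (Matrix.IsHermitian.eigenvectorUnitary hA : Matrix m m ℝ)


lemma energy_eq (i : m) : absMat A i i = ∑ k, |μ k| * (U i k)^2 := by
  set C : Matrix m m ℝ := U * diagonal (fun k => |μ k|) * Uᴴ with hC
  have hCpsd : C.PosSemidef :=
    (posSemidef_diagonal_iff.mpr (fun k => abs_nonneg _)).mul_mul_conjTranspose_same U
  have hsq : C ^ 2 = A * Aᴴ := by
    rw [hA.eq, pow_two, hC, conj_mul_conj _ _ _ (Uh_mul_U hA), diagonal_mul_diagonal]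
    conv_rhs => rw [spectral hA]
    rw [conj_mul_conj _ _ _ (Uh_mul_U hA), diagonal_mul_diagonal]
    have h2 : (fun k => |μ k| * |μ k|) = fun k => μ k * μ k :=
      funext fun k => abs_mul_abs_self _
    rw [h2]
  have hCeq : C = absMat A := by
    open MatrixOrder in
    have e1 : absMat A = (posSemidef_self_mul_conjTranspose A).1.cfc Real.sqrt := by
      rw [IsHermitian.cfc, Unitary.conjStarAlgAut_apply]; rfl
    open MatrixOrder in
    have e2 : CFC.sqrt (A*Aᴴ) = cfc Real.sqrt (A*Aᴴ) := by
      rw [CFC.sqrt_eq_cfc, cfc_nnreal_eq_real _ _ (posSemidef_self_mul_conjTranspose A).nonneg]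
      congr 1
      funext y
      exact (Real.sqrt.eq_1 y).symm
    open MatrixOrder in
    rw [e1, ← IsHermitian.cfc_eq, ← e2]
    open MatrixOrder in
    exact (CFC.sqrt_unique (by rw [← pow_two]; exact hsq) hCpsd.nonneg).symm
  rw [← hCeq, hC, entry_helper]
  exact Finset.sum_congr rfl fun k _ => by simp [sq]

end energy

section pointwise
variable {n : ℕ} {A : Matrix (Fin (n+1)) (Fin (n+1)) ℝ} (hA : A.IsHermitian)

local notation "μ" => Matrix.IsHermitian.eigenvalues hA
local notation "U" => (Matrix.IsHermitian.eigenvectorUnitary hA : Matrix (Fin (n+1)) (Fin (n+1)) ℝ)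

lemma pointwise_eq (i : Fin (n+1)) (x : ℝ) (hx : x ≠ 0) :
    (1 - (Complex.I * (x : ℂ)) *
        ((Complex.I * (x : ℂ)) • (1 : Matrix (Fin n) (Fin n) ℂ)
          - (A.map Complex.ofReal).submatrix i.succAbove i.succAbove).det /
        ((Complex.I * (x : ℂ)) • (1 : Matrix (Fin (n + 1)) (Fin (n + 1)) ℂ)
          - A.map Complex.ofReal).det)
    = ∑ k, (((U i k)^2 : ℝ) : ℂ) * ((μ k : ℂ) / ((μ k : ℂ) - Complex.I * x)) := by
  set z : ℂ := Complex.I * x with hz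
  set Ac : Matrix (Fin (n+1)) (Fin (n+1)) ℂ := A.map Complex.ofReal with hAc
  set Uc : Matrix (Fin (n+1)) (Fin (n+1)) ℂ := (U).map Complex.ofReal with hUc
  have hUcUh : Uc * Ucᴴ = 1 := by
    rw [hUc, conjT_map, ← hmap, U_mul_Uh hA, hmap_one]
  have hUhUc : Ucᴴ * Uc = 1 := by
    rw [hUc, conjT_map, ← hmap, Uh_mul_U hA, hmap_one]
  have hzsub : ∀ k, z - (μ k : ℂ) ≠ 0 := by
    intro k h
    apply hx
    have := congrArg Complex.im h
    simpa [hz] using this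
  have hMz : z • (1 : Matrix (Fin (n+1)) (Fin (n+1)) ℂ) - Ac
      = Uc * diagonal (fun k => z - (μ k : ℂ)) * Ucᴴ := by
    have hAceq : Ac = Uc * diagonal (fun k => (μ k : ℂ)) * Ucᴴ := by
      rw [hAc]
      conv_lhs => rw [spectral hA]
      rw [hmap, hmap, conjT_map, hUc]
      congr 1
      congr 1
      exact Matrix.diagonal_map (by simp)
    have hone : z • (1 : Matrix (Fin (n+1)) (Fin (n+1)) ℂ)
        = Uc * diagonal (fun _ => z) * Ucᴴ := by
      rw [smul_one_eq_diagonal]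
      calc diagonal (fun _ => z) = z • (1 : Matrix (Fin (n+1)) (Fin (n+1)) ℂ) :=
            (smul_one_eq_diagonal z).symm
        _ = z • (Uc * Ucᴴ) := by rw [hUcUh]
        _ = Uc * (z • (1 : Matrix (Fin (n+1)) (Fin (n+1)) ℂ)) * Ucᴴ := by
            simp [Matrix.mul_smul, Matrix.smul_mul]
        _ = Uc * diagonal (fun _ => z) * Ucᴴ := by rw [smul_one_eq_diagonal]
    rw [hAceq, hone, ← Matrix.sub_mul, ← Matrix.mul_sub, Matrix.diagonal_sub]
  have hdet : (z • (1 : Matrix (Fin (n+1)) (Fin (n+1)) ℂ) - Ac).det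
      = ∏ k, (z - (μ k : ℂ)) := by
    rw [hMz, det_mul_right_comm, hUcUh, one_mul, det_diagonal]
  have hdetne : (z • (1 : Matrix (Fin (n+1)) (Fin (n+1)) ℂ) - Ac).det ≠ 0 := by
    rw [hdet]
    exact Finset.prod_ne_zero_iff.2 fun k _ => hzsub k
  have hinv : (z • (1 : Matrix (Fin (n+1)) (Fin (n+1)) ℂ) - Ac)⁻¹
      = Uc * diagonal (fun k => (z - (μ k : ℂ))⁻¹) * Ucᴴ := by
    apply Matrix.inv_eq_right_inv
    rw [hMz, conj_mul_conj _ _ _ hUhUc, diagonal_mul_diagonal]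
    have h1 : (fun k => (z - (μ k : ℂ)) * (z - (μ k : ℂ))⁻¹) = fun _ => (1:ℂ) :=
      funext fun k => mul_inv_cancel₀ (hzsub k)
    rw [h1, diagonal_one, Matrix.mul_one, hUcUh]
  have hinv_entry : (z • (1 : Matrix (Fin (n+1)) (Fin (n+1)) ℂ) - Ac)⁻¹ i i
      = ∑ k, (z - (μ k : ℂ))⁻¹ * (((U i k)^2 : ℝ) : ℂ) := by
    rw [hinv, entry_helper]
    refine Finset.sum_congr rfl fun k _ => ?_
    simp only [hUc, Matrix.map_apply, RCLike.star_def, Complex.conj_ofReal]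
    push_cast
    ring
  have hsubdet : ((z • (1 : Matrix (Fin n) (Fin n) ℂ))
        - Ac.submatrix i.succAbove i.succAbove).det
      = adjugate (z • (1 : Matrix (Fin (n+1)) (Fin (n+1)) ℂ) - Ac) i i := by
    rw [Matrix.adjugate_fin_succ_eq_det_submatrix]
    have h1 : ((-1:ℂ)) ^ ((i:ℕ) + i) = 1 := Even.neg_one_pow ⟨i, rfl⟩
    rw [h1, one_mul]
    have hss : (z • (1 : Matrix (Fin (n+1)) (Fin (n+1)) ℂ) - Ac).submatrix
          i.succAbove i.succAbove
        = z • (1 : Matrix (Fin n) (Fin n) ℂ) - Ac.submatrix i.succAbove i.succAbove := by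
      ext a b
      simp [Matrix.submatrix_apply, Matrix.sub_apply, Matrix.smul_apply, Matrix.one_apply,
        Fin.succAbove_right_injective.eq_iff]
    rw [hss]
  have hfrac : adjugate (z • (1 : Matrix (Fin (n+1)) (Fin (n+1)) ℂ) - Ac) i i /
        (z • (1 : Matrix (Fin (n+1)) (Fin (n+1)) ℂ) - Ac).det
      = (z • (1 : Matrix (Fin (n+1)) (Fin (n+1)) ℂ) - Ac)⁻¹ i i := by
    rw [Matrix.inv_def, Ring.inverse_eq_inv']
    simp [Matrix.smul_apply, div_eq_inv_mul, mul_comm]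
  have hone : (1:ℂ) = ∑ k, (((U i k)^2 : ℝ) : ℂ) := by
    exact_mod_cast (sum_c_one hA i).symm
  rw [hsubdet, mul_div_assoc, hfrac, hinv_entry, Finset.mul_sum]
  conv_lhs => rw [hone]
  rw [← Finset.sum_sub_distrib]
  refine Finset.sum_congr rfl fun k _ => ?_
  have hms : (μ k : ℂ) - z ≠ 0 := fun h => hzsub k (by
    have := congrArg Neg.neg h
    simpa [neg_sub] using this)
  have key : (1:ℂ) - z * (z - (μ k : ℂ))⁻¹ = (μ k : ℂ) / ((μ k : ℂ) - z) := by
    rw [eq_div_iff hms]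
    field_simp [hzsub k]
    ring
  linear_combination ((((U) i k)^2 : ℝ) : ℂ) * key

end pointwise


/-- Coulson integral formula for a vertex:
E_G(v_i) = (1/π) PV∫_ℝ [1 - ix·φ(G - v_i; ix)/φ(G; ix)] dx, formalized as:
the symmetric partial integrals tend to π·E_G(v_i). -/
theorem coulson_integral_formula_vertex {n : ℕ} (G : SimpleGraph (Fin (n + 1)))
    (i : Fin (n + 1)) :
    Filter.Tendsto
      (fun R : ℝ => ∫ x in (-R)..R,
        (1 - (Complex.I * (x : ℂ)) *
            ((Complex.I * (x : ℂ)) • (1 : Matrix (Fin n) (Fin n) ℂ)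
              - ((adjMat G).map Complex.ofReal).submatrix i.succAbove i.succAbove).det /
            ((Complex.I * (x : ℂ)) • (1 : Matrix (Fin (n + 1)) (Fin (n + 1)) ℂ)
              - (adjMat G).map Complex.ofReal).det))
      Filter.atTop
      (nhds ((Real.pi : ℂ) * (vertexEnergy G i : ℝ))) := by
  have hA := adjMat_isHermitian G
  set μ := hA.eigenvalues with hμ
  set U := (hA.eigenvectorUnitary : Matrix (Fin (n+1)) (Fin (n+1)) ℝ) with hU
  have h0 : ∀ᵐ x : ℝ ∂volume, x ≠ 0 := by
    rw [MeasureTheory.ae_iff]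
    simp only [ne_eq, not_not, Set.setOf_eq_eq_singleton]
    exact Real.volume_singleton
  have hint : ∀ R : ℝ, (∫ x in (-R)..R,
      (1 - (Complex.I * (x : ℂ)) *
          ((Complex.I * (x : ℂ)) • (1 : Matrix (Fin n) (Fin n) ℂ)
            - ((adjMat G).map Complex.ofReal).submatrix i.succAbove i.succAbove).det /
          ((Complex.I * (x : ℂ)) • (1 : Matrix (Fin (n + 1)) (Fin (n + 1)) ℂ)
            - (adjMat G).map Complex.ofReal).det))
      = ∑ k, (((U i k)^2 : ℝ) : ℂ) *
          ∫ x in (-R)..R, (μ k : ℂ) / ((μ k : ℂ) - Complex.I * x) := by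
    intro R
    rw [intervalIntegral.integral_congr_ae (g := fun x : ℝ =>
        ∑ k, (((U i k)^2 : ℝ) : ℂ) * ((μ k : ℂ) / ((μ k : ℂ) - Complex.I * x)))
      (by filter_upwards [h0] with x hx _; exact pointwise_eq hA i x hx)]
    rw [intervalIntegral.integral_finset_sum
      (fun k _ => (intB (μ k) (-R) R).const_mul _)]
    exact Finset.sum_congr rfl fun k _ => intervalIntegral.integral_const_mul _ _
  simp only [hint]
  have hlim := tendsto_finset_sum (univ : Finset (Fin (n+1)))
    (fun k _ => (keyLimit (μ k)).const_mul ((((U i k)^2 : ℝ) : ℂ)))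
  convert hlim using 2
  have hE : vertexEnergy G i = ∑ k, |μ k| * (U i k)^2 := energy_eq hA i
  rw [show ((vertexEnergy G i : ℝ) : ℂ) = ∑ k, ((|μ k| * (U i k)^2 : ℝ) : ℂ) by
    exact_mod_cast congrArg Complex.ofReal hE]
  rw [Finset.mul_sum]
  refine Finset.sum_congr rfl fun k _ => ?_
  push_cast
  ring
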